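/- If p is an odd prime with H(p) = k (so that k ≥ 2), then p ≤ 2·3^{k−2} + 1. -/

import Mathlib

/-- The height function: H(1) = 0 and H(n) = H(φ(n)) + 1 for n ≥ 2. -/
def H : ℕ → ℕ
  | 0 => 0
  | 1 => 0
  | n + 2 => H (Nat.totient (n + 2)) + 1
  decreasing_by exact Nat.totient_lt _ (by omega)

/-- The sum-of-heights function S(n) = ∑_{k=1}^n H(k). -/
def S (n : ℕ) : ℕ := ∑ k ∈ Finset.Icc 1 n, H k

lemma H_eq {n : ℕ} (h : 2 ≤ n) : H n = H n.totient + 1 := by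
  match n, h with
  | n + 2, _ => rw [H]

lemma H_two : H 2 = 1 := by
  rw [H_eq (by norm_num), show Nat.totient 2 = 1 by decide]
  simp [H]

lemma H_one_le {n : ℕ} (h : 2 ≤ n) : 1 ≤ H n := by
  rw [H_eq h]; omega

lemma totient_two_le {n : ℕ} (h : 3 ≤ n) : 2 ≤ n.totient := by
  obtain ⟨c, hc⟩ := Nat.totient_even (by omega : 2 < n)
  have : 0 < n.totient := Nat.totient_pos.mpr (by omega)
  omega

lemma H_two_mul : ∀ n : ℕ, Even n → 2 ≤ n → H (2 * n) = H n + 1 := by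
  intro n
  induction n using Nat.strong_induction_on with
  | _ n ih =>
    intro hev h2
    have ht : (2 * n).totient = 2 * n.totient :=
      Nat.totient_mul_of_prime_of_dvd Nat.prime_two hev.two_dvd
    rcases eq_or_lt_of_le h2 with h | h4
    · subst h
      rw [H_eq (by norm_num : (2:ℕ) ≤ 4), show Nat.totient 4 = 2 by decide, H_two]
    · have h3 : 3 ≤ n := h4
      have hφev : Even n.totient := Nat.totient_even (by omega)
      have hφ2 : 2 ≤ n.totient := totient_two_le h3
      have hφlt : n.totient < n := Nat.totient_lt n (by omega)
      have hIH := ih n.totient hφlt hφev hφ2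
      rw [H_eq (by omega : 2 ≤ 2 * n), ht, hIH, H_eq h2]

lemma exists_odd_prime_factor {a : ℕ} (h4 : 4 ≤ a) (hev : Even a)
    (hodd : ¬ Even (a / 2)) :
    ∃ q m, q.Prime ∧ Odd q ∧ Even m ∧ 2 ≤ m ∧ a = q * m ∧ 2 * q ≤ a := by
  obtain ⟨c, hc⟩ := hev
  have hca : a = 2 * c := by omega
  have hc2 : a / 2 = c := by omega
  rw [hc2] at hodd
  have hc3 : 3 ≤ c := by
    rcases Nat.even_or_odd c with h | h
    · exact absurd h hodd
    · obtain ⟨t, ht⟩ := h; omega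
  set q := c.minFac with hq
  have hqp : q.Prime := Nat.minFac_prime (by omega : c ≠ 1)
  have hqd : q ∣ c := Nat.minFac_dvd c
  have hq2 : q ≠ 2 := by
    intro h
    exact hodd (even_iff_two_dvd.mpr (h ▸ hqd))
  have hqo : Odd q := hqp.odd_of_ne_two hq2
  obtain ⟨d, hd⟩ := hqd
  have hd1 : 1 ≤ d := by
    rcases Nat.eq_zero_or_pos d with h | h
    · exfalso; subst h; rw [mul_zero] at hd; omega
    · exact h
  refine ⟨q, 2 * d, hqp, hqo, ⟨d, by ring⟩, by omega, by rw [hca, hd]; ring, ?_⟩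
  have : q ≤ c := Nat.le_of_dvd (by omega) ⟨d, hd⟩
  omega

lemma keyQ : ∀ N : ℕ,
    (∀ p m, p.Prime → Odd p → Even m → 2 ≤ m → p * m = N → H (p * m) + 1 = H m + H p) ∧
    (∀ a b, Even a → Even b → 2 ≤ a → 2 ≤ b → a * b = N → H (a * b) = H a + H b) := by
  intro N
  induction N using Nat.strong_induction_on with
  | _ N ih =>
    have partB : ∀ p m, p.Prime → Odd p → Even m → 2 ≤ m → p * m = N →
        H (p * m) + 1 = H m + H p := by
      intro p m hp hpo hme hm2 hN
      have hp3 : 3 ≤ p := by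
        have := hp.two_le
        rcases eq_or_lt_of_le this with h | h
        · exfalso; rw [← h] at hpo; exact (Nat.not_odd_iff_even.mpr even_two) hpo
        · omega
      have hHp : H p = H (p - 1) + 1 := by
        rw [H_eq (by omega : 2 ≤ p), Nat.totient_prime hp]
      have hpm2 : 2 ≤ p * m := by nlinarith
      by_cases hdvd : p ∣ m
      · have ht : (p * m).totient = p * m.totient :=
          Nat.totient_mul_of_prime_of_dvd hp hdvd
        have hm4 : 3 ≤ m := by
          have := Nat.le_of_dvd (by omega) hdvd
          omega
        have hφev : Even m.totient := Nat.totient_even (by omega)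
        have hφ2 : 2 ≤ m.totient := totient_two_le hm4
        have hφlt : p * m.totient < N := by
          rw [← hN]
          have := Nat.totient_lt m (by omega)
          nlinarith
        have hQ := (ih _ hφlt).1 p m.totient hp hpo hφev hφ2 rfl
        rw [H_eq hpm2, ht]
        have hm' : H m = H m.totient + 1 := H_eq hm2
        omega
      · have hcop : p.Coprime m := (Nat.Prime.coprime_iff_not_dvd hp).mpr hdvd
        have ht : (p * m).totient = (p - 1) * m.totient := by
          rw [Nat.totient_mul hcop, Nat.totient_prime hp]
        rcases eq_or_lt_of_le hm2 with h2 | h4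
        · -- m = 2
          rw [H_eq hpm2, ht, ← h2, show Nat.totient 2 = 1 by decide, mul_one, H_two]
          omega
        · have hm3 : 3 ≤ m := h4
          have hφev : Even m.totient := Nat.totient_even (by omega)
          have hφ2 : 2 ≤ m.totient := totient_two_le hm3
          have hp1ev : Even (p - 1) := Nat.Odd.sub_odd hpo odd_one
          have hp12 : 2 ≤ p - 1 := by omega
          have hφlt : (p - 1) * m.totient < N := by
            rw [← hN]
            exact mul_lt_mul' (by omega) (Nat.totient_lt m (by omega)) (Nat.zero_le _)
              (by omega)
          have hQ := (ih _ hφlt).2 (p - 1) m.totient hp1ev hφev hp12 hφ2 rfl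
          rw [H_eq hpm2, ht]
          have hm' : H m = H m.totient + 1 := H_eq hm2
          omega
    refine ⟨partB, ?_⟩
    intro a b hae hbe ha2 hb2 hN
    rcases eq_or_lt_of_le ha2 with h | ha4
    · rw [← h, H_two_mul b hbe hb2, H_two]; omega
    · have ha4' : 4 ≤ a := by
        obtain ⟨c, hc⟩ := hae; omega
      by_cases ha' : Even (a / 2)
      · -- a = 2 * (a/2) with a/2 even
        obtain ⟨c, hc⟩ := hae
        have hca : a = 2 * c := by omega
        have hc2 : a / 2 = c := by omega
        rw [hc2] at ha'
        have hc22 : 2 ≤ c := by omega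
        have hcb_ev : Even (c * b) := hbe.mul_left c
        have hcb2 : 2 ≤ c * b := by nlinarith
        have hlt : c * b < N := by rw [← hN, hca]; nlinarith
        have hQ := (ih _ hlt).2 c b ha' hbe hc22 hb2 rfl
        have h1 : H (a * b) = H (c * b) + 1 := by
          rw [hca, mul_assoc]
          exact H_two_mul (c * b) hcb_ev hcb2
        have h2 : H a = H c + 1 := by rw [hca]; exact H_two_mul c ha' hc22
        omega
      · obtain ⟨q, m, hqp, hqo, hmev, hm2, hqm, hq2a⟩ :=
          exists_odd_prime_factor ha4' hae ha'
        have hq3 : 3 ≤ q := by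
          have := hqp.two_le
          rcases eq_or_lt_of_le this with h | h
          · exfalso; rw [← h] at hqo; exact (Nat.not_odd_iff_even.mpr even_two) hqo
          · omega
        have hmb_ev : Even (m * b) := hbe.mul_left m
        have hmb2 : 2 ≤ m * b := by nlinarith
        have hab : a * b = q * (m * b) := by rw [hqm]; ring
        have hB1 : H (q * (m * b)) + 1 = H (m * b) + H q :=
          partB q (m * b) hqp hqo hmb_ev hmb2 (by rw [← hab, hN])
        have hlt1 : m * b < N := by
          rw [← hN, hqm]
          nlinarith
        have hmbQ : H (m * b) = H m + H b := (ih _ hlt1).2 m b hmev hbe hm2 hb2 rfl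
        have hlta : a < N := by rw [← hN]; nlinarith
        have hA : H (q * m) + 1 = H m + H q := (ih a hlta).1 q m hqp hqo hmev hm2 hqm.symm
        rw [hab, hqm]
        omega

lemma main_ineq : ∀ n : ℕ, Even n → 2 ≤ n → n ≤ 2 * 3 ^ (H n - 1) := by
  intro n
  induction n using Nat.strong_induction_on with
  | _ n ih =>
    intro hev h2
    rcases eq_or_lt_of_le h2 with h | h3
    · rw [← h, H_two]; norm_num
    · have h4 : 4 ≤ n := by obtain ⟨c, hc⟩ := hev; omega
      by_cases h' : Even (n / 2)
      · obtain ⟨c, hc⟩ := hev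
        have hcn : n = 2 * c := by omega
        have hc2 : n / 2 = c := by omega
        rw [hc2] at h'
        have hc22 : 2 ≤ c := by omega
        have hIH := ih c (by omega) h' hc22
        have hHn : H n = H c + 1 := by rw [hcn]; exact H_two_mul c h' hc22
        have h1 : 1 ≤ H c := H_one_le hc22
        obtain ⟨t, htt⟩ : ∃ t, H c = t + 1 := ⟨H c - 1, by omega⟩
        rw [htt] at hIH
        simp only [Nat.add_sub_cancel] at hIH
        have : H n - 1 = t + 1 := by omega
        rw [this, hcn]
        calc 2 * c ≤ 2 * (2 * 3 ^ t) := by omega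
          _ ≤ 2 * 3 ^ (t + 1) := by ring_nf; omega
      · obtain ⟨q, m, hqp, hqo, hmev, hm2, hqm, hq2n⟩ :=
          exists_odd_prime_factor h4 hev h'
        have hq3 : 3 ≤ q := by
          have := hqp.two_le
          rcases eq_or_lt_of_le this with h | h
          · exfalso; rw [← h] at hqo; exact (Nat.not_odd_iff_even.mpr even_two) hqo
          · omega
        have hB : H (q * m) + 1 = H m + H q :=
          (keyQ n).1 q m hqp hqo hmev hm2 hqm.symm
        have hHq : H q = H (q - 1) + 1 := by
          rw [H_eq (by omega : 2 ≤ q), Nat.totient_prime hqp]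
        have hq1ev : Even (q - 1) := Nat.Odd.sub_odd hqo odd_one
        have hq12 : 2 ≤ q - 1 := by omega
        have hq1lt : q - 1 < n := by omega
        have hIHq := ih (q - 1) hq1lt hq1ev hq12
        have hmlt : m < n := by nlinarith [hqm, hq3, hm2]
        have hIHm := ih m hmlt hmev hm2
        have h1q : 1 ≤ H (q - 1) := H_one_le hq12
        have h1m : 1 ≤ H m := H_one_le hm2
        -- set up exponents
        obtain ⟨t, htt⟩ : ∃ t, H (q - 1) = t + 1 := ⟨H (q-1) - 1, by omega⟩
        obtain ⟨s, hss⟩ : ∃ s, H m = s + 1 := ⟨H m - 1, by omega⟩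
        rw [htt] at hIHq
        rw [hss] at hIHm
        simp only [Nat.add_sub_cancel] at hIHq hIHm
        have hqb : q ≤ 3 ^ (t + 1) := by
          have h3t : 1 ≤ 3 ^ t := Nat.one_le_pow _ _ (by norm_num)
          have : 3 ^ (t + 1) = 3 * 3 ^ t := by ring
          omega
        have hHn : H n = s + t + 2 := by
          rw [← hqm] at hB
          omega
        have hexp : H n - 1 = s + t + 1 := by omega
        rw [hexp, hqm]
        calc q * m ≤ 3 ^ (t + 1) * (2 * 3 ^ s) :=
              Nat.mul_le_mul hqb hIHm
          _ = 2 * 3 ^ (s + t + 1) := by ring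

theorem largest_prime_at_height (p k : ℕ) (hp : p.Prime) (hodd : Odd p)
    (hH : H p = k) : p ≤ 2 * 3 ^ (k - 2) + 1 := by
  have hp3 : 3 ≤ p := by
    have := hp.two_le
    rcases eq_or_lt_of_le this with h | h
    · exfalso; rw [← h] at hodd; exact (Nat.not_odd_iff_even.mpr even_two) hodd
    · omega
  have hHp : H p = H (p - 1) + 1 := by
    rw [H_eq (by omega : 2 ≤ p), Nat.totient_prime hp]
  have hp1ev : Even (p - 1) := Nat.Odd.sub_odd hodd odd_one
  have hp12 : 2 ≤ p - 1 := by omega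
  have h1 : 1 ≤ H (p - 1) := H_one_le hp12
  have hmain := main_ineq (p - 1) hp1ev hp12
  have hk : k - 2 = H (p - 1) - 1 := by omega
  rw [hk]
  omega
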